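/- Let 0 ≤ τ < a ≤ p^s − 1 be integers and let h ∈ F[x] be a polynomial that is either zero or a unit modulo (x − δ_{0,0})^{p^s}. Let C be the ideal of S generated by u(x − δ_{0,0})^a + u²(x − δ_{0,0})^τ h(x), and let L be the smallest nonnegative integer such that u²(x − δ_{0,0})^L ∈ C. Then L = a if h = 0, and L = min{a, p^s − a + τ} if h ≠ 0. -/

import Mathlib

set_option maxHeartbeats 2000000


open Polynomial

/-- The finite chain ring `R^t = 𝔽_{p^m}[u]/⟨u^t⟩`. -/
abbrev Rt (p m t : ℕ) [Fact p.Prime] : Type _ :=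
  Polynomial (GaloisField p m) ⧸ Ideal.span {(X : Polynomial (GaloisField p m)) ^ t}

/-- The canonical projection `𝔽_{p^m}[u] → R^t`. -/
noncomputable def mkRt (p m t : ℕ) [Fact p.Prime] :
    Polynomial (GaloisField p m) →+* Rt p m t :=
  Ideal.Quotient.mk _

/-- The element `u ∈ R^t`. -/
noncomputable def uRt (p m t : ℕ) [Fact p.Prime] : Rt p m t := mkRt p m t X

/-- The canonical embedding `𝔽_{p^m} → R^t`. -/
noncomputable def κ (p m t : ℕ) [Fact p.Prime] : GaloisField p m →+* Rt p m t :=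
  (mkRt p m t).comp (C : GaloisField p m →+* Polynomial (GaloisField p m))

/-- The quotient ring `R^t[x]/⟨x^N − δ⟩`. -/
abbrev Qr (p m t : ℕ) [Fact p.Prime] (N : ℕ) (δ : Rt p m t) : Type _ :=
  Polynomial (Rt p m t) ⧸ Ideal.span {(X : Polynomial (Rt p m t)) ^ N - C δ}

/-- The ring structure on `R^t[x]/⟨x^N − δ⟩` (the quotient ring instance, stated explicitly). -/
noncomputable instance Qr.instCommRing (p m t : ℕ) [Fact p.Prime] (N : ℕ) (δ : Rt p m t) :
    CommRing (Qr p m t N δ) :=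
  @Ideal.Quotient.commRing (Polynomial (Rt p m t)) _ _

/-- The canonical projection `R^t[x] → R^t[x]/⟨x^N − δ⟩`. -/
noncomputable def mkQr (p m t : ℕ) [Fact p.Prime] (N : ℕ) (δ : Rt p m t) :
    Polynomial (Rt p m t) →+* Qr p m t N δ :=
  @Ideal.Quotient.mk _ _ _ (@Ideal.instIsTwoSided_1 (Polynomial (Rt p m t)) _ _)

section Aux
variable (p m : ℕ) [Fact p.Prime]

/-- The projection `R³ → F` killing `u`. -/
noncomputable def pi1 : Rt p m 3 →+* GaloisField p m :=
  Ideal.Quotient.lift _ (evalRingHom 0) (by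
    intro f hf
    rw [Ideal.mem_span_singleton] at hf
    obtain ⟨g, rfl⟩ := hf
    simp)

@[simp] lemma pi1_mkRt (f : Polynomial (GaloisField p m)) :
    pi1 p m (mkRt p m 3 f) = f.eval 0 := rfl

@[simp] lemma pi1_kappa (c : GaloisField p m) : pi1 p m (κ p m 3 c) = c := by
  show pi1 p m (mkRt p m 3 (C c)) = c
  simp

@[simp] lemma pi1_comp_kappa : (pi1 p m).comp (κ p m 3) = RingHom.id _ := by
  ext c; simp

@[simp] lemma pi1_u : pi1 p m (uRt p m 3) = 0 := by
  show pi1 p m (mkRt p m 3 X) = 0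
  simp

lemma uRt_pow_three : (uRt p m 3) ^ 3 = 0 := by
  show (mkRt p m 3 X) ^ 3 = 0
  rw [← map_pow]
  exact Ideal.Quotient.eq_zero_iff_mem.2 (Ideal.subset_span rfl)

lemma ker_pi1 : RingHom.ker (pi1 p m) = Ideal.span {uRt p m 3} := by
  ext r
  constructor
  · intro hr
    obtain ⟨f, rfl⟩ := Ideal.Quotient.mk_surjective r
    rw [RingHom.mem_ker] at hr
    have h0 : f.coeff 0 = 0 := by
      have := (pi1_mkRt p m f)
      rw [coeff_zero_eq_eval_zero]
      exact hr
    obtain ⟨g, rfl⟩ := X_dvd_iff.2 h0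
    rw [Ideal.mem_span_singleton]
    exact ⟨mkRt p m 3 g, (map_mul (mkRt p m 3) X g).symm⟩
  · intro hr
    rw [Ideal.mem_span_singleton] at hr
    obtain ⟨c, rfl⟩ := hr
    rw [RingHom.mem_ker, map_mul, pi1_u, zero_mul]

lemma kappa_u2_cancel {c : GaloisField p m} (h : uRt p m 3 ^ 2 * κ p m 3 c = 0) :
    c = 0 := by
  have h' : mkRt p m 3 (X ^ 2 * C c) = 0 := by
    rw [map_mul, map_pow]; exact h
  rw [show mkRt p m 3 (X ^ 2 * C c) = Ideal.Quotient.mk _ (X ^ 2 * C c) from rfl,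
    Ideal.Quotient.eq_zero_iff_mem, Ideal.mem_span_singleton] at h'
  -- X^3 ∣ X^2 * C c
  by_contra hc
  have h2 : (X : Polynomial (GaloisField p m)) ^ 2 * X ∣ X ^ 2 * C c := by
    rw [← pow_succ]; exact h'
  have h3 : (X : Polynomial (GaloisField p m)) ∣ C c :=
    (mul_dvd_mul_iff_left (pow_ne_zero 2 X_ne_zero)).1 h2
  rw [X_dvd_iff, coeff_C_zero] at h3
  exact hc h3

end Aux

section AuxPoly
variable (p m : ℕ) [Fact p.Prime]

lemma U_pow_three : (C (uRt p m 3) : Polynomial (Rt p m 3)) ^ 3 = 0 := by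
  rw [← C_pow, uRt_pow_three, C_0]

lemma inj_u2 {D : Polynomial (GaloisField p m)}
    (h : (C (uRt p m 3)) ^ 2 * D.map (κ p m 3) = 0) : D = 0 := by
  ext n
  have hn := congrArg (fun q => Polynomial.coeff q n) h
  simp only [← C_pow, coeff_C_mul, coeff_map, coeff_zero] at hn
  simpa using kappa_u2_cancel p m hn

lemma ker_mapPi1 {A : Polynomial (Rt p m 3)} (h : A.map (pi1 p m) = 0) :
    ∃ B, A = C (uRt p m 3) * B := by
  have hA : A ∈ RingHom.ker (mapRingHom (pi1 p m)) := by
    rw [RingHom.mem_ker]; exact h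
  rw [Polynomial.ker_mapRingHom, ker_pi1, Ideal.map_span, Set.image_singleton] at hA
  obtain ⟨B, hB⟩ := Ideal.mem_span_singleton.1 hA
  exact ⟨B, hB⟩

lemma split_poly (A : Polynomial (Rt p m 3)) :
    ∃ B, A = (A.map (pi1 p m)).map (κ p m 3) + C (uRt p m 3) * B := by
  obtain ⟨B, hB⟩ := ker_mapPi1 p m (A := A - (A.map (pi1 p m)).map (κ p m 3)) (by
    rw [Polynomial.map_sub, Polynomial.map_map, pi1_comp_kappa, Polynomial.map_id, sub_self])
  exact ⟨B, by linear_combination hB⟩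

end AuxPoly

/-- Let `S = R³[x]/⟨x^{p^s} − δ⟩` with `δ = δ₀ + u²δ₂`, `δ₀, δ₂ ≠ 0`.  Let
`0 ≤ τ < a ≤ p^s − 1`, let `h ∈ 𝔽_{p^m}[x]` be zero or a unit modulo `(x − δ_{0,0})^{p^s}`,
let `C` be the ideal of `S` generated by `u(x − δ_{0,0})^a + u²(x − δ_{0,0})^τ h(x)`, and let
`L` be the smallest nonnegative integer such that `u²(x − δ_{0,0})^L ∈ C`.  Then `L = a` if
`h = 0`, and `L = min {a, p^s − a + τ}` if `h ≠ 0`. -/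
theorem stmt_9 (p m s : ℕ) [Fact p.Prime] (hm : m ≠ 0)
    (d0 d2 : GaloisField p m) (hd0 : d0 ≠ 0) (hd2 : d2 ≠ 0)
    (δ00 : GaloisField p m) (hδ00 : δ00 ^ p ^ s = d0)
    (a τ : ℕ) (hτa : τ < a) (ha : a ≤ p ^ s - 1)
    (h : Polynomial (GaloisField p m)) (hh : h = 0 ∨ h.eval δ00 ≠ 0)
    (L : ℕ)
    (hL : (mkQr p m 3 (p ^ s) (mkRt p m 3 (C d0 + C d2 * X ^ 2)) (C (uRt p m 3))) ^ 2 *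
        (mkQr p m 3 (p ^ s) (mkRt p m 3 (C d0 + C d2 * X ^ 2))
          (X - C (κ p m 3 δ00))) ^ L ∈
      Ideal.span {mkQr p m 3 (p ^ s) (mkRt p m 3 (C d0 + C d2 * X ^ 2))
          (C (uRt p m 3)) *
        (mkQr p m 3 (p ^ s) (mkRt p m 3 (C d0 + C d2 * X ^ 2))
          (X - C (κ p m 3 δ00))) ^ a +
        (mkQr p m 3 (p ^ s) (mkRt p m 3 (C d0 + C d2 * X ^ 2)) (C (uRt p m 3))) ^ 2 *
        (mkQr p m 3 (p ^ s) (mkRt p m 3 (C d0 + C d2 * X ^ 2))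
          (X - C (κ p m 3 δ00))) ^ τ *
        mkQr p m 3 (p ^ s) (mkRt p m 3 (C d0 + C d2 * X ^ 2)) (h.map (κ p m 3))})
    (hLmin : ∀ l : ℕ,
      (mkQr p m 3 (p ^ s) (mkRt p m 3 (C d0 + C d2 * X ^ 2)) (C (uRt p m 3))) ^ 2 *
        (mkQr p m 3 (p ^ s) (mkRt p m 3 (C d0 + C d2 * X ^ 2))
          (X - C (κ p m 3 δ00))) ^ l ∈
      Ideal.span {mkQr p m 3 (p ^ s) (mkRt p m 3 (C d0 + C d2 * X ^ 2))
          (C (uRt p m 3)) *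
        (mkQr p m 3 (p ^ s) (mkRt p m 3 (C d0 + C d2 * X ^ 2))
          (X - C (κ p m 3 δ00))) ^ a +
        (mkQr p m 3 (p ^ s) (mkRt p m 3 (C d0 + C d2 * X ^ 2)) (C (uRt p m 3))) ^ 2 *
        (mkQr p m 3 (p ^ s) (mkRt p m 3 (C d0 + C d2 * X ^ 2))
          (X - C (κ p m 3 δ00))) ^ τ *
        mkQr p m 3 (p ^ s) (mkRt p m 3 (C d0 + C d2 * X ^ 2)) (h.map (κ p m 3))} →
      L ≤ l) :
    (h = 0 → L = a) ∧ (h ≠ 0 → L = min a (p ^ s - a + τ)) := by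
  classical
  -- abbreviations
  set δR : Rt p m 3 := mkRt p m 3 (C d0 + C d2 * X ^ 2) with hδR
  set mq : Polynomial (Rt p m 3) →+* Qr p m 3 (p ^ s) δR := mkQr p m 3 (p ^ s) δR with hmq
  set uQ : Qr p m 3 (p ^ s) δR := mq (C (uRt p m 3)) with huQ
  set yQ : Qr p m 3 (p ^ s) δR := mq (X - C (κ p m 3 δ00)) with hyQ
  set Hq : Qr p m 3 (p ^ s) δR := mq (h.map (κ p m 3)) with hHq
  set gQ : Qr p m 3 (p ^ s) δR := uQ * yQ ^ a + uQ ^ 2 * yQ ^ τ * Hq with hgQ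
  -- numerics
  have hp2 : 2 ≤ p := (Fact.out : p.Prime).two_le
  have hps1 : 1 ≤ p ^ s := Nat.one_le_pow _ _ (by omega)
  have haN : a < p ^ s := by omega
  obtain ⟨e, he⟩ : ∃ e, p ^ s = a + e := ⟨p ^ s - a, by omega⟩
  have he1 : 1 ≤ e := by omega
  -- Frobenius identity in F[X]
  haveI : CharP (Polynomial (GaloisField p m)) p :=
    charP_of_injective_ringHom (C_injective (R := GaloisField p m)) p
  have hFrob : (X - C δ00 : Polynomial (GaloisField p m)) ^ (a + e)
      = X ^ (a + e) - C d0 := by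
    rw [← he, sub_pow_char_pow, ← C_pow, hδ00]
  -- the relation polynomial
  have hδRval : δR = κ p m 3 d0 + κ p m 3 d2 * uRt p m 3 ^ 2 := by
    rw [hδR]
    show mkRt p m 3 (C d0 + C d2 * X ^ 2) = _
    rw [map_add, map_mul, map_pow]; rfl
  have hXdelta : (X : Polynomial (Rt p m 3)) ^ (p ^ s) - C δR
      = (X - C (κ p m 3 δ00)) ^ (a + e)
        - C (uRt p m 3) ^ 2 * C (κ p m 3 d2) := by
    have h1 : ((X - C δ00 : Polynomial (GaloisField p m)) ^ (a + e)).map (κ p m 3)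
        = (X - C (κ p m 3 δ00)) ^ (a + e) := by
      simp [Polynomial.map_pow, Polynomial.map_sub]
    rw [← h1, hFrob, he]
    simp only [Polynomial.map_sub, Polynomial.map_pow, map_X, map_C, hδRval]
    rw [C_add, C_mul, C_pow]
    ring
  -- quotient relations
  haveI hTS : (Ideal.span {(X : Polynomial (Rt p m 3)) ^ (p ^ s) - C δR}).IsTwoSided :=
    @Ideal.instIsTwoSided_1 (Polynomial (Rt p m 3)) _ _
  have hmk0 : mq ((X : Polynomial (Rt p m 3)) ^ (p ^ s) - C δR) = 0 :=
    Ideal.Quotient.eq_zero_iff_mem.2 (Ideal.subset_span rfl)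
  have huQ3 : uQ ^ 3 = 0 := by
    rw [huQ, ← map_pow, U_pow_three, map_zero]
  set c2Q : Qr p m 3 (p ^ s) δR := mq (C (κ p m 3 d2)) with hc2Q
  have hyN : yQ ^ (a + e) = uQ ^ 2 * c2Q := by
    have h0 := (congrArg mq hXdelta).symm.trans hmk0
    rw [map_sub, map_mul, map_pow, map_pow] at h0
    rw [hyQ, huQ, hc2Q]
    linear_combination h0
  clear_value δR mq uQ yQ Hq gQ c2Q
  -- membership: u² y^a
  have mem_a : uQ ^ 2 * yQ ^ a ∈ Ideal.span {gQ} :=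
    Ideal.mem_span_singleton'.2 ⟨uQ, by rw [hgQ]; linear_combination (yQ ^ τ * Hq) * huQ3⟩
  -- the generic component-extraction
  have key : ∀ l : ℕ, uQ ^ 2 * yQ ^ l ∈ Ideal.span {gQ} →
      ∃ P0 P1 Q2 Q1 : Polynomial (GaloisField p m),
        P0 * (X - C δ00) ^ a = Q1 * (X - C δ00) ^ (a + e) ∧
        P0 * (X - C δ00) ^ τ * h + P1 * (X - C δ00) ^ a
          = (X - C δ00) ^ l + Q2 * (X - C δ00) ^ (a + e) := by
    intro l hmem
    obtain ⟨cq, hcq⟩ := Ideal.mem_span_singleton'.1 hmem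
    obtain ⟨P, hPeq⟩ : ∃ P, mq P = cq := by
      rw [hmq]; exact Ideal.Quotient.mk_surjective cq
    have hgm : gQ = mq (C (uRt p m 3) * (X - C (κ p m 3 δ00)) ^ a +
        C (uRt p m 3) ^ 2 * (X - C (κ p m 3 δ00)) ^ τ * (h.map (κ p m 3))) := by
      rw [hgQ, huQ, hyQ, hHq]; simp only [map_add, map_mul, map_pow]
    have hum : uQ ^ 2 * yQ ^ l
        = mq (C (uRt p m 3) ^ 2 * (X - C (κ p m 3 δ00)) ^ l) := by
      rw [huQ, hyQ]; simp only [map_mul, map_pow]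
    have h2 : mq (P * (C (uRt p m 3) * (X - C (κ p m 3 δ00)) ^ a +
        C (uRt p m 3) ^ 2 * (X - C (κ p m 3 δ00)) ^ τ * (h.map (κ p m 3))) -
        C (uRt p m 3) ^ 2 * (X - C (κ p m 3 δ00)) ^ l) = 0 := by
      rw [map_sub, map_mul, hPeq, ← hgm, ← hum, hcq, sub_self]
    rw [hmq] at h2
    have h3 := Ideal.Quotient.eq_zero_iff_mem.1 h2
    replace h3 := (Ideal.mem_span_singleton (α := Polynomial (Rt p m 3))).1 h3
    obtain ⟨Q, hQ⟩ := h3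
    rw [hXdelta] at hQ
    -- reduce mod u
    have h4 := congrArg (Polynomial.map (pi1 p m)) hQ
    simp only [Polynomial.map_sub, Polynomial.map_mul, Polynomial.map_add,
      Polynomial.map_pow, Polynomial.map_map, pi1_comp_kappa, Polynomial.map_id,
      map_C, map_X, pi1_u, pi1_kappa, C_0, zero_mul, mul_zero, zero_pow, sub_zero, zero_add,
      add_zero, zero_sub, mul_neg, neg_zero, ne_eq, OfNat.ofNat_ne_zero,
      not_false_eq_true, pow_succ, pow_zero, one_mul] at h4
    have hQ0 : Q.map (pi1 p m) = 0 := by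
      rcases mul_eq_zero.1 (show ((X : Polynomial (GaloisField p m)) - C δ00) ^ (a + e) *
          Q.map (pi1 p m) = 0 by linear_combination -h4) with hc | hc
      · exact absurd hc (pow_ne_zero _ (X_sub_C_ne_zero δ00))
      · exact hc
    obtain ⟨Q', hQ'⟩ := ker_mapPi1 p m hQ0
    obtain ⟨P', hP'⟩ := split_poly p m P
    obtain ⟨P'', hP''⟩ := split_poly p m P'
    obtain ⟨Q'', hQ''⟩ := split_poly p m Q'
    obtain ⟨Q3, hQ3⟩ := split_poly p m Q''
    rw [hQ', hQ'', hQ3, hP', hP''] at hQ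
    set P0 : Polynomial (GaloisField p m) := P.map (pi1 p m) with hP0
    set P1 : Polynomial (GaloisField p m) := P'.map (pi1 p m) with hP1
    set Q1 : Polynomial (GaloisField p m) := Q'.map (pi1 p m) with hQ1
    set Q2 : Polynomial (GaloisField p m) := Q''.map (pi1 p m) with hQ2
    set U : Polynomial (Rt p m 3) := C (uRt p m 3) with hU
    set Yk : Polynomial (Rt p m 3) := X - C (κ p m 3 δ00) with hYk
    set ι := Polynomial.map (κ p m 3) with hι
    have hU3 : U ^ 3 = 0 := U_pow_three p m
    set E1' : Polynomial (Rt p m 3) := ι P0 * Yk ^ a - ι Q1 * Yk ^ (a + e) with hE1'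
    set E2' : Polynomial (Rt p m 3) := ι P0 * Yk ^ τ * ι h + ι P1 * Yk ^ a
      - Yk ^ l - ι Q2 * Yk ^ (a + e) with hE2'
    set J2 : Polynomial (Rt p m 3) := ι P1 * Yk ^ τ * ι h + P'' * Yk ^ a
      + U * (P'' * Yk ^ τ * ι h) - Q3 * Yk ^ (a + e) + C (κ p m 3 d2) * ι Q1
      + U * (C (κ p m 3 d2) * ι Q2) + U ^ 2 * (C (κ p m 3 d2) * Q3) with hJ2
    have hKey : U * E1' + U ^ 2 * E2' + U ^ 3 * J2 = 0 := by
      rw [hE1', hE2', hJ2, hι]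
      linear_combination hQ
    have hE1q : U ^ 2 * E1' = 0 := by
      linear_combination U * hKey - (E2' + U * J2) * hU3
    have hE1 : P0 * (X - C δ00) ^ a = Q1 * (X - C δ00) ^ (a + e) := by
      rw [← sub_eq_zero]
      refine inj_u2 p m (D := P0 * (X - C δ00) ^ a - Q1 * (X - C δ00) ^ (a + e)) ?_
      rw [← hU]
      simp only [Polynomial.map_sub, Polynomial.map_mul, Polynomial.map_pow,
        map_X, map_C]
      linear_combination hE1q
    have hE1z : E1' = 0 := by
      have h5 := congrArg ι (sub_eq_zero.2 hE1)
      rw [hι] at h5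
      simp only [Polynomial.map_sub, Polynomial.map_mul, Polynomial.map_pow,
        map_X, map_C, Polynomial.map_zero] at h5
      rw [hE1', hι, hYk]
      exact h5
    have hE2q : U ^ 2 * E2' = 0 := by
      linear_combination hKey - U * hE1z - J2 * hU3
    have hE2 : P0 * (X - C δ00) ^ τ * h + P1 * (X - C δ00) ^ a
        = (X - C δ00) ^ l + Q2 * (X - C δ00) ^ (a + e) := by
      rw [← sub_eq_zero]
      refine inj_u2 p m (D := P0 * (X - C δ00) ^ τ * h + P1 * (X - C δ00) ^ a
        - ((X - C δ00) ^ l + Q2 * (X - C δ00) ^ (a + e))) ?_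
      rw [← hU]
      simp only [Polynomial.map_sub, Polynomial.map_mul, Polynomial.map_pow,
        Polynomial.map_add, map_X, map_C]
      linear_combination hE2q
    exact ⟨P0, P1, Q2, Q1, hE1, hE2⟩
  -- numeric conclusion from the component equations
  have num : ∀ (l T : ℕ) (Q2 : Polynomial (GaloisField p m)), T ≤ a →
      (X - C δ00 : Polynomial (GaloisField p m)) ^ T ∣
        (X - C δ00) ^ l + Q2 * (X - C δ00) ^ (a + e) → T ≤ l := by
    intro l T Q2 hTa hdvd
    by_contra hlt
    push_neg at hlt
    have hk : ∃ k, a + e = l + (k + 1) := ⟨a + e - l - 1, by omega⟩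
    obtain ⟨k, hk⟩ := hk
    have hYne : (X - C δ00 : Polynomial (GaloisField p m)) ^ l ≠ 0 :=
      pow_ne_zero _ (X_sub_C_ne_zero δ00)
    have hdvd2 : (X - C δ00 : Polynomial (GaloisField p m)) ^ l * (X - C δ00) ∣
        (X - C δ00) ^ l * (1 + Q2 * (X - C δ00) ^ (k + 1)) := by
      have h1 : (X - C δ00 : Polynomial (GaloisField p m)) ^ l * (X - C δ00)
          = (X - C δ00) ^ (l + 1) := by rw [pow_succ]
      have h2 : (X - C δ00 : Polynomial (GaloisField p m)) ^ l *
          (1 + Q2 * (X - C δ00) ^ (k + 1))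
          = (X - C δ00) ^ l + Q2 * (X - C δ00) ^ (a + e) := by
        rw [hk, pow_add]; ring
      rw [h1, h2]
      exact dvd_trans (pow_dvd_pow _ (by omega)) hdvd
    have hdvd3 := (mul_dvd_mul_iff_left hYne).1 hdvd2
    rw [Polynomial.dvd_iff_isRoot] at hdvd3
    simp [Polynomial.IsRoot, eval_add, eval_one, eval_mul, eval_pow, eval_sub, eval_X,
      eval_C, sub_self] at hdvd3
  constructor
  · -- case h = 0
    intro h0
    have hub : L ≤ a := hLmin a mem_a
    obtain ⟨P0, P1, Q2, Q1, hE1, hE2⟩ := key L hL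
    have hdvd : (X - C δ00 : Polynomial (GaloisField p m)) ^ a ∣
        (X - C δ00) ^ L + Q2 * (X - C δ00) ^ (a + e) := by
      rw [← hE2, h0]
      exact ⟨P1, by ring⟩
    have := num L a Q2 le_rfl hdvd
    omega
  · -- case h ≠ 0
    intro hne
    have heval : h.eval δ00 ≠ 0 := hh.resolve_left hne
    have hTe : p ^ s - a + τ = τ + e := by omega
    rw [hTe]
    -- membership of u² y^(τ+e)
    have hcop : IsCoprime ((X - C δ00 : Polynomial (GaloisField p m)) ^ (a + e)) h := by
      refine IsCoprime.pow_left ?_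
      refine (Polynomial.irreducible_X_sub_C δ00).coprime_iff_not_dvd.2 ?_
      rw [Polynomial.dvd_iff_isRoot]
      exact heval
    obtain ⟨bb, cc, hbc⟩ := hcop
    set Bq : Qr p m 3 (p ^ s) δR := mq (bb.map (κ p m 3)) with hBq
    set Cq : Qr p m 3 (p ^ s) δR := mq (cc.map (κ p m 3)) with hCq
    have hch : Cq * Hq = 1 - Bq * yQ ^ (a + e) := by
      have h1 := congrArg (fun q => mq (q.map (κ p m 3))) hbc
      simp only [Polynomial.map_add, Polynomial.map_mul, Polynomial.map_pow,
        Polynomial.map_sub, Polynomial.map_one, map_X, map_C, map_add, map_mul,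
        map_pow, map_one, map_sub] at h1
      rw [hCq, hHq, hBq, hyQ]
      simp only [map_sub]
      linear_combination h1
    have mem_et : uQ ^ 2 * yQ ^ (τ + e) ∈ Ideal.span {gQ} := by
      refine Ideal.mem_span_singleton'.2 ⟨Cq * yQ ^ e, ?_⟩
      rw [hgQ]
      linear_combination (Cq * c2Q - Bq * c2Q * yQ ^ (τ + e) * uQ) * huQ3 +
        (Cq * uQ - uQ ^ 2 * yQ ^ (τ + e) * Bq) * hyN + uQ ^ 2 * yQ ^ (τ + e) * hch
    have hub : L ≤ min a (τ + e) := by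
      rcases le_total a (τ + e) with hle | hle
      · rw [min_eq_left hle]; exact hLmin a mem_a
      · rw [min_eq_right hle]; exact hLmin (τ + e) mem_et
    obtain ⟨P0, P1, Q2, Q1, hE1, hE2⟩ := key L hL
    have hP0 : P0 = Q1 * (X - C δ00) ^ e := by
      have hYa : ((X - C δ00 : Polynomial (GaloisField p m)) ^ a) ≠ 0 :=
        pow_ne_zero _ (X_sub_C_ne_zero δ00)
      apply mul_right_cancel₀ hYa
      rw [hE1, pow_add]; ring
    have hdvd : (X - C δ00 : Polynomial (GaloisField p m)) ^ (min a (τ + e)) ∣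
        (X - C δ00) ^ L + Q2 * (X - C δ00) ^ (a + e) := by
      rw [← hE2, hP0]
      refine dvd_add ?_ ?_
      · have : (X - C δ00 : Polynomial (GaloisField p m)) ^ (min a (τ + e)) ∣
            (X - C δ00) ^ (τ + e) := pow_dvd_pow _ (min_le_right _ _)
        refine Dvd.dvd.trans this ⟨Q1 * h, ?_⟩
        rw [pow_add]; ring
      · exact Dvd.dvd.trans (pow_dvd_pow _ (min_le_left _ _)) ⟨P1, by ring⟩
    have := num L (min a (τ + e)) Q2 (min_le_left _ _) hdvd
    omega
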